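/- arXiv:1310.2052 — 6 statements merged into one kernel-verified Lean document; each statement's English description precedes it below -/
import Mathlib

section
/- Let h : ℝ^d → ℝ^d be continuous with a unique zero θ* satisfying the mean-reverting condition ⟨θ - θ*, h(θ)⟩ > 0 for all θ ≠ θ*. Let (h^n) be a sequence of continuous functions, where each h^n has a unique zero θ*ⁿ and satisfies the mean-reverting condition ⟨θ - θ*ⁿ, h^n(θ)⟩ > 0 for θ ≠ θ*ⁿ. If h^n → h locally uniformly, then θ*ⁿ → θ* as n → ∞. -/
open scoped RealInnerProductSpace
open Filter

/-- If `hⁿ → h` locally uniformly, all functions are continuous with unique zeros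
satisfying the mean-reverting condition, then the zeros `θ*ⁿ` converge to `θ*`. -/
theorem stmt_1 {d : ℕ} (h : EuclideanSpace ℝ (Fin d) → EuclideanSpace ℝ (Fin d))
    (hn : ℕ → EuclideanSpace ℝ (Fin d) → EuclideanSpace ℝ (Fin d))
    (θstar : EuclideanSpace ℝ (Fin d)) (θstarn : ℕ → EuclideanSpace ℝ (Fin d))
    (hcont : Continuous h) (hncont : ∀ n, Continuous (hn n))
    (hzero : h θstar = 0) (hzero_unique : ∀ θ, h θ = 0 → θ = θstar)
    (hmr : ∀ θ, θ ≠ θstar → (0:ℝ) < ⟪θ - θstar, h θ⟫)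
    (hnzero : ∀ n, hn n (θstarn n) = 0)
    (hnzero_unique : ∀ n θ, hn n θ = 0 → θ = θstarn n)
    (hnmr : ∀ n θ, θ ≠ θstarn n → (0:ℝ) < ⟪θ - θstarn n, hn n θ⟫)
    (hloc : TendstoLocallyUniformly hn h atTop) :
    Tendsto θstarn atTop (nhds θstar) := by
  rw [Metric.tendsto_nhds]
  intro ε hε
  -- Step 1: eventually, the inner product against hn is positive on the sphere of radius ε
  have key : ∀ᶠ n in atTop, ∀ θ ∈ Metric.sphere θstar ε,
      (0:ℝ) < ⟪θ - θstar, hn n θ⟫ := by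
    rcases (Metric.sphere θstar ε).eq_empty_or_nonempty with hS | hS
    · simp [hS]
    · have hgcont : Continuous fun θ => ⟪θ - θstar, h θ⟫ :=
        (continuous_id.sub continuous_const).inner hcont
      obtain ⟨θ₀, hθ₀, hmin⟩ := (isCompact_sphere θstar ε).exists_isMinOn hS
        hgcont.continuousOn
      have hθ₀ne : θ₀ ≠ θstar := by
        intro hEq
        have : dist θ₀ θstar = ε := hθ₀
        rw [hEq, dist_self] at this
        exact hε.ne this
      have hm : (0:ℝ) < ⟪θ₀ - θstar, h θ₀⟫ := hmr θ₀ hθ₀ne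
      set m := ⟪θ₀ - θstar, h θ₀⟫ with hmdef
      have hunif : TendstoUniformlyOn hn h atTop (Metric.sphere θstar ε) :=
        (tendstoLocallyUniformly_iff_forall_isCompact.mp hloc) _
          (isCompact_sphere θstar ε)
      have hev := (Metric.tendstoUniformlyOn_iff.mp hunif) (m / ε) (div_pos hm hε)
      filter_upwards [hev] with n hev θ hθ
      have h1 : m ≤ ⟪θ - θstar, h θ⟫ := hmin hθ
      have h2 : ‖θ - θstar‖ = ε := by
        rw [← dist_eq_norm]; exact hθ
      have h3 : |⟪θ - θstar, hn n θ - h θ⟫| ≤ ε * (dist (h θ) (hn n θ)) := by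
        calc |⟪θ - θstar, hn n θ - h θ⟫| ≤ ‖θ - θstar‖ * ‖hn n θ - h θ‖ :=
              abs_real_inner_le_norm _ _
          _ = ε * dist (h θ) (hn n θ) := by rw [h2, dist_comm, dist_eq_norm]
      have h4 : ε * dist (h θ) (hn n θ) < ε * (m / ε) :=
        mul_lt_mul_of_pos_left (hev θ hθ) hε
      rw [mul_div_cancel₀ m hε.ne'] at h4
      have h5 : ⟪θ - θstar, hn n θ⟫ = ⟪θ - θstar, h θ⟫ + ⟪θ - θstar, hn n θ - h θ⟫ := by
        rw [← inner_add_right]; congr 1; abel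
      have h6 : -(m : ℝ) < ⟪θ - θstar, hn n θ - h θ⟫ :=
        neg_lt_of_abs_lt (lt_of_le_of_lt h3 h4)
      linarith
  -- Step 2: positivity on the sphere forces the zero inside the ball
  filter_upwards [key] with n hkey
  by_contra hge
  push_neg at hge
  have hr : (0:ℝ) < ‖θstarn n - θstar‖ := lt_of_lt_of_le hε (by
    rw [← dist_eq_norm]; exact hge)
  set r := ‖θstarn n - θstar‖ with hrdef
  set t := ε / r with htdef
  have ht0 : 0 < t := div_pos hε hr
  have ht1 : t ≤ 1 := by
    rw [htdef, div_le_one hr]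
    rw [hrdef, ← dist_eq_norm]; exact hge
  set θ := θstar + t • (θstarn n - θstar) with hθdef
  have hθsub : θ - θstar = t • (θstarn n - θstar) := by
    rw [hθdef]; abel
  have hsphere : θ ∈ Metric.sphere θstar ε := by
    simp only [Metric.mem_sphere, dist_eq_norm, hθsub, norm_smul, Real.norm_eq_abs,
      abs_of_pos ht0]
    rw [htdef, div_mul_cancel₀ ε hr.ne']
  have hpos := hkey θ hsphere
  rw [hθsub, real_inner_smul_left] at hpos
  have hpos' : (0:ℝ) < ⟪θstarn n - θstar, hn n θ⟫ := by nlinarith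
  have hθn : θ - θstarn n = (t - 1) • (θstarn n - θstar) := by
    rw [hθdef, sub_smul, one_smul]; abel
  rcases eq_or_lt_of_le ht1 with ht | ht
  · -- t = 1 : θ = θstarn n, so hn n θ = 0
    have hθeq : θ = θstarn n := by
      have : θ - θstarn n = 0 := by rw [hθn, ht, sub_self, zero_smul]
      exact sub_eq_zero.mp this
    rw [hθeq, hnzero n, inner_zero_right] at hpos'
    exact lt_irrefl _ hpos'
  · -- t < 1 : θ ≠ θstarn n, mean-reverting at θ gives contradiction
    have hθne : θ ≠ θstarn n := by
      intro hEq
      have : θ - θstarn n = 0 := sub_eq_zero.mpr hEq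
      rw [hθn, smul_eq_zero] at this
      rcases this with h' | h'
      · exact (sub_ne_zero.mpr ht.ne).elim h'
      · exact hr.ne' (by rw [hrdef, h', norm_zero])
    have := hnmr n θ hθne
    rw [hθn, real_inner_smul_left] at this
    nlinarith
end

section
/- Let h, h^n : ℝ^d → ℝ^d be continuously differentiable functions with unique zeros θ*, θ*ⁿ respectively; assume θ*ⁿ → θ*, Dh(θ*) is invertible, Dh^n → Dh locally uniformly, and there exists α > 0 and a vector E such that for every θ ∈ ℝ^d, n^α (h^n(θ) - h(θ)) → E(θ) as n → ∞, where E(θ*) = E. Then n^α (θ*ⁿ - θ*) → -Dh(θ*)^{-1} E as n → ∞. -/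
open Filter

set_option maxHeartbeats 1000000 in
/-- Transfer of the weak error rate to the implicit weak error:
if `n^α (hⁿ(θ) - h(θ)) → E(θ)` pointwise, `Dhⁿ → Dh` locally uniformly, `θ*ⁿ → θ*`
and `Dh(θ*)` is invertible, then `n^α (θ*ⁿ - θ*) → -Dh(θ*)⁻¹ E(θ*)`. -/
theorem stmt_2 {d : ℕ} (h : EuclideanSpace ℝ (Fin d) → EuclideanSpace ℝ (Fin d))
    (hn : ℕ → EuclideanSpace ℝ (Fin d) → EuclideanSpace ℝ (Fin d))
    (θstar : EuclideanSpace ℝ (Fin d)) (θstarn : ℕ → EuclideanSpace ℝ (Fin d))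
    (hC1 : ContDiff ℝ 1 h) (hnC1 : ∀ n, ContDiff ℝ 1 (hn n))
    (hzero : h θstar = 0) (hnzero : ∀ n, hn n (θstarn n) = 0)
    (hconv : Tendsto θstarn atTop (nhds θstar))
    (A : EuclideanSpace ℝ (Fin d) ≃L[ℝ] EuclideanSpace ℝ (Fin d))
    (hA : (A : EuclideanSpace ℝ (Fin d) →L[ℝ] EuclideanSpace ℝ (Fin d)) = fderiv ℝ h θstar)
    (hDloc : TendstoLocallyUniformly (fun n θ => fderiv ℝ (hn n) θ)
      (fun θ => fderiv ℝ h θ) atTop)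
    (α : ℝ) (hα : 0 < α) (Efun : EuclideanSpace ℝ (Fin d) → EuclideanSpace ℝ (Fin d))
    (Evec : EuclideanSpace ℝ (Fin d)) (hE : Efun θstar = Evec)
    (hrate : ∀ θ, Tendsto (fun n : ℕ => (n : ℝ) ^ α • (hn n θ - h θ)) atTop (nhds (Efun θ))) :
    Tendsto (fun n : ℕ => (n : ℝ) ^ α • (θstarn n - θstar)) atTop (nhds (-(A.symm Evec))) := by
  classical
  set Acl : EuclideanSpace ℝ (Fin d) →L[ℝ] EuclideanSpace ℝ (Fin d) := (A : EuclideanSpace ℝ (Fin d) →L[ℝ] EuclideanSpace ℝ (Fin d)) with hAcl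
  set C : ℝ := ‖(A.symm : EuclideanSpace ℝ (Fin d) →L[ℝ] EuclideanSpace ℝ (Fin d))‖ with hCdef
  have hCnn : 0 ≤ C := norm_nonneg _
  -- notation
  set s : ℕ → EuclideanSpace ℝ (Fin d) := fun n => (n : ℝ) ^ α • (θstarn n - θstar) with hs
  set u : ℕ → EuclideanSpace ℝ (Fin d) := fun n => (n : ℝ) ^ α • hn n θstar with hudef
  -- `u n → Evec`
  have hu : Tendsto u atTop (nhds Evec) := by
    have := hrate θstar
    rw [hE] at this
    simpa [hudef, hzero] using this
  have hpow_nn : ∀ n : ℕ, 0 ≤ (n : ℝ) ^ α := fun n => Real.rpow_nonneg (Nat.cast_nonneg n) α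
  -- key mean-value estimate
  have key : ∀ δ : ℝ, 0 < δ → ∀ᶠ n in atTop,
      ‖Acl (θstarn n - θstar) + hn n θstar‖ ≤ δ * ‖θstarn n - θstar‖ := by
    intro δ hδ
    obtain ⟨t, ht, hev⟩ :=
      (Metric.tendstoLocallyUniformly_iff.mp hDloc) (δ / 2) (by positivity) θstar
    have hcont : ContinuousAt (fun θ => fderiv ℝ h θ) θstar :=
      ((hC1.continuous_fderiv one_ne_zero).continuousAt)
    have h2 : ∀ᶠ y in nhds θstar, dist (fderiv ℝ h y) Acl < δ / 2 := by
      have := hcont (Metric.ball_mem_nhds (fderiv ℝ h θstar) (show (0:ℝ) < δ/2 by positivity))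
      rw [← hA] at this
      exact this
    obtain ⟨r, hr, hball⟩ := Metric.mem_nhds_iff.mp (Filter.inter_mem ht h2)
    have hxn : ∀ᶠ n in atTop, θstarn n ∈ Metric.ball θstar r :=
      hconv (Metric.ball_mem_nhds θstar hr)
    filter_upwards [hev, hxn] with n hn1 hn2
    -- on the ball, `‖Dhⁿ - A‖ ≤ δ`
    have hbound : ∀ y ∈ Metric.ball θstar r, ‖fderiv ℝ (hn n) y - Acl‖ ≤ δ := by
      intro y hy
      have hy' := hball hy
      have d1 : dist (fderiv ℝ h y) (fderiv ℝ (hn n) y) < δ / 2 := hn1 y hy'.1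
      have d2 : dist (fderiv ℝ h y) Acl < δ / 2 := hy'.2
      have : dist (fderiv ℝ (hn n) y) Acl < δ := by
        calc dist (fderiv ℝ (hn n) y) Acl
            ≤ dist (fderiv ℝ (hn n) y) (fderiv ℝ h y) + dist (fderiv ℝ h y) Acl :=
              dist_triangle _ _ _
          _ < δ / 2 + δ / 2 := by rw [dist_comm (fderiv ℝ (hn n) y)]; exact add_lt_add d1 d2
          _ = δ := by ring
      rw [dist_eq_norm] at this
      exact this.le
    -- mean value inequality for `g = hⁿ - A`
    have hmvt : ‖(hn n (θstarn n) - Acl (θstarn n)) - (hn n θstar - Acl θstar)‖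
        ≤ δ * ‖θstarn n - θstar‖ := by
      refine Convex.norm_image_sub_le_of_norm_hasFDerivWithin_le
        (f := fun y => hn n y - Acl y) (f' := fun y => fderiv ℝ (hn n) y - Acl)
        (fun y hy => ?_) hbound (convex_ball θstar r) (Metric.mem_ball_self hr) hn2
      exact (((hnC1 n).differentiable one_ne_zero y).hasFDerivAt.sub
        (Acl.hasFDerivAt)).hasFDerivWithinAt
    have : (hn n (θstarn n) - Acl (θstarn n)) - (hn n θstar - Acl θstar)
        = -(Acl (θstarn n - θstar) + hn n θstar) := by
      rw [hnzero n, map_sub]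
      abel
    rw [this, norm_neg] at hmvt
    exact hmvt
  -- rescaled key estimate
  have key' : ∀ δ : ℝ, 0 < δ → ∀ᶠ n in atTop, ‖Acl (s n) + u n‖ ≤ δ * ‖s n‖ := by
    intro δ hδ
    filter_upwards [key δ hδ] with n hkn
    have e1 : Acl (s n) + u n = (n : ℝ) ^ α • (Acl (θstarn n - θstar) + hn n θstar) := by
      simp [hs, hudef, map_smul, smul_add]
    rw [e1, norm_smul, Real.norm_eq_abs, abs_of_nonneg (hpow_nn n),
      hs, norm_smul, Real.norm_eq_abs, abs_of_nonneg (hpow_nn n)]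
    calc (n : ℝ) ^ α * ‖Acl (θstarn n - θstar) + hn n θstar‖
        ≤ (n : ℝ) ^ α * (δ * ‖θstarn n - θstar‖) :=
          mul_le_mul_of_nonneg_left hkn (hpow_nn n)
      _ = δ * ((n : ℝ) ^ α * ‖θstarn n - θstar‖) := by ring
  -- `u` is eventually bounded
  have hub : ∀ᶠ n in atTop, ‖u n‖ ≤ ‖Evec‖ + 1 := by
    have : Tendsto (fun n => ‖u n‖) atTop (nhds ‖Evec‖) := hu.norm
    exact this.eventually_le_const (by linarith)
  -- elementary: `‖s n‖ ≤ C * ‖A (s n)‖`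
  have hsA : ∀ n, ‖s n‖ ≤ C * ‖Acl (s n)‖ := by
    intro n
    have h1 : ‖(A.symm : EuclideanSpace ℝ (Fin d) →L[ℝ] EuclideanSpace ℝ (Fin d)) (Acl (s n))‖
        = ‖s n‖ := by simp [hAcl]
    rw [← h1]
    exact ContinuousLinearMap.le_opNorm _ _
  -- bootstrap bound on `‖s n‖`
  set M : ℝ := 2 * C * (‖Evec‖ + 1) with hMdef
  have hMnn : 0 ≤ M := by positivity
  have hsb : ∀ᶠ n in atTop, ‖s n‖ ≤ M := by
    have hδ0 : (0:ℝ) < 1 / (2 * (C + 1)) := by positivity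
    filter_upwards [key' _ hδ0, hub] with n h1 h2
    have h3 : ‖Acl (s n)‖ ≤ ‖Acl (s n) + u n‖ + ‖u n‖ := by
      have := norm_add_le (Acl (s n) + u n) (-u n)
      simpa using this
    have h4 := hsA n
    have h5 : C * (1 / (2 * (C + 1))) ≤ 1 / 2 := by
      rw [mul_one_div, div_le_div_iff₀ (by positivity) (by norm_num)]
      nlinarith
    have hsnn : 0 ≤ ‖s n‖ := norm_nonneg _
    nlinarith [norm_nonneg (Acl (s n) + u n)]
  -- `A (s n) + u n → 0`
  have hv0 : Tendsto (fun n => Acl (s n) + u n) atTop (nhds 0) := by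
    rw [NormedAddCommGroup.tendsto_nhds_zero]
    intro ε hε
    have hδ : (0:ℝ) < ε / (2 * (M + 1)) := by positivity
    filter_upwards [key' _ hδ, hsb] with n h1 h2
    calc ‖Acl (s n) + u n‖ ≤ ε / (2 * (M + 1)) * ‖s n‖ := h1
      _ ≤ ε / (2 * (M + 1)) * M := by
          exact mul_le_mul_of_nonneg_left h2 hδ.le
      _ < ε := by
          rw [div_mul_eq_mul_div, div_lt_iff₀ (by positivity)]
          nlinarith
  -- conclude
  have hfinal : Tendsto (fun n => A.symm (Acl (s n) + u n) - A.symm (u n)) atTop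
      (nhds (-(A.symm Evec))) := by
    have t1 : Tendsto (fun n => A.symm (Acl (s n) + u n)) atTop (nhds 0) := by
      have := (A.symm.continuous.tendsto 0).comp hv0
      simpa [Function.comp_def] using this
    have t2 : Tendsto (fun n => A.symm (u n)) atTop (nhds (A.symm Evec)) := by
      have := (A.symm.continuous.tendsto Evec).comp hu
      simpa [Function.comp_def] using this
    have := t1.sub t2
    simpa using this
  refine hfinal.congr (fun n => ?_)
  simp [map_add, hAcl]
end

section
/- Let γ : [0,∞) → (0,∞) be decreasing to 0 with ∑_{n≥1} γ(n) = ∞, and suppose γ(t) = γ₀/t for t ≥ 1. Let λ > 0, a > 0, b > 0 with bλγ₀ > a. Set s_n = ∑_{k=1}^n γ(k). Then there is a constant C such that exp(-λ b s_n) ∑_{k=1}^n exp(λ b s_k) γ(k)^{a+1} ≤ C n^{-a} for all n ≥ 1. -/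
open Finset

-- helper: sum of k^(p-1) over Icc 1 n is ≤ (1 + 1/p) n^p
lemma aux_sum_rpow (p : ℝ) (hp : 0 < p) (n : ℕ) (hn : 1 ≤ n) :
    ∑ k ∈ Finset.Icc 1 n, (k : ℝ) ^ (p - 1) ≤ (1 + 1 / p) * (n : ℝ) ^ p := by
  have hn' : (1 : ℝ) ≤ (n : ℝ) := by exact_mod_cast hn
  have hnp1 : (1 : ℝ) ≤ (n : ℝ) ^ p := Real.one_le_rpow hn' hp.le
  rcases le_or_gt 1 p with hp1 | hp1
  · -- each term ≤ n^(p-1)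
    calc ∑ k ∈ Finset.Icc 1 n, (k : ℝ) ^ (p - 1)
        ≤ ∑ _k ∈ Finset.Icc 1 n, (n : ℝ) ^ (p - 1) := by
          apply Finset.sum_le_sum
          intro k hk
          have hk' := (Finset.mem_Icc.mp hk)
          have : (k : ℝ) ≤ (n : ℝ) := by exact_mod_cast hk'.2
          exact Real.rpow_le_rpow (by positivity) this (by linarith)
      _ = n * (n : ℝ) ^ (p - 1) := by
          rw [Finset.sum_const, Nat.card_Icc]
          simp [hn]
      _ = (n : ℝ) ^ p := by
          rw [show p = 1 + (p - 1) by ring, Real.rpow_add (by positivity), Real.rpow_one]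
          ring_nf
      _ ≤ (1 + 1 / p) * (n : ℝ) ^ p := by
          nlinarith [Real.rpow_nonneg (by positivity : (0:ℝ) ≤ (n:ℝ)) p, one_div_pos.mpr hp]
  · -- p < 1 : integral comparison
    have hanti : AntitoneOn (fun x : ℝ => x ^ (p - 1)) (Set.Icc (1 : ℝ) n) := by
      intro x hx y hy hxy
      exact Real.rpow_le_rpow_of_nonpos (lt_of_lt_of_le zero_lt_one hx.1) hxy (by linarith)
    have hint : ∑ i ∈ Finset.Ico 1 n, ((i + 1 : ℕ) : ℝ) ^ (p - 1)
        ≤ ∫ x in (1 : ℕ)..(n : ℕ), (x : ℝ) ^ (p - 1) := by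
      have := AntitoneOn.sum_le_integral_Ico hn (f := fun x : ℝ => x ^ (p - 1)) ?_
      · exact this
      · simpa using hanti
    have hval : (∫ x in (1 : ℕ)..(n : ℕ), (x : ℝ) ^ (p - 1)) = ((n:ℝ) ^ p - 1) / p := by
      rw [integral_rpow (Or.inl (by linarith))]
      push_cast
      rw [sub_add_cancel, Real.one_rpow]
    have hsplit : ∑ k ∈ Finset.Icc 1 n, (k : ℝ) ^ (p - 1)
        = 1 + ∑ i ∈ Finset.Ico 1 n, ((i + 1 : ℕ) : ℝ) ^ (p - 1) := by
      rw [← Finset.Ico_add_one_right_eq_Icc, Finset.sum_eq_sum_Ico_succ_bot (by omega)]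
      congr 1
      · norm_num
      · rw [← Finset.sum_Ico_add' (fun k : ℕ => (k : ℝ) ^ (p - 1)) 1 n 1]
    rw [hsplit]
    have h2 : (1:ℝ) + ((n:ℝ) ^ p - 1) / p ≤ (1 + 1/p) * (n:ℝ) ^ p := by
      have h3 : (1:ℝ) + ((n:ℝ) ^ p - 1) / p = (p + ((n:ℝ)^p - 1)) / p := by
        field_simp
      have hppi : (1/p)*p = 1 := by field_simp
      rw [h3, div_le_iff₀ hp]
      nlinarith [mul_le_mul_of_nonneg_left hnp1 hp.le]
    calc (1:ℝ) + ∑ i ∈ Finset.Ico 1 n, ((i + 1 : ℕ) : ℝ) ^ (p - 1)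
        ≤ 1 + ((n:ℝ) ^ p - 1) / p := by rw [← hval]; linarith
      _ ≤ (1 + 1/p) * (n:ℝ) ^ p := h2

/-- Discrete comparison estimate: with `γ(k) = γ₀/k`, `s_n = ∑_{k=1}^n γ(k)` and
`bλγ₀ > a`, one has `exp(-λb s_n) ∑_{k=1}^n exp(λb s_k) γ(k)^{a+1} ≤ C n^{-a}`. -/
theorem stmt_4 (γ₀ lam a b : ℝ) (hγ₀ : 0 < γ₀) (hlam : 0 < lam)
    (ha : 0 < a) (hb : 0 < b) (hcond : a < b * lam * γ₀) :
    ∃ C : ℝ, 0 < C ∧ ∀ n : ℕ, 1 ≤ n →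
      Real.exp (-(lam * b) * (∑ k ∈ Finset.Icc 1 n, γ₀ / (k : ℝ))) *
        ∑ k ∈ Finset.Icc 1 n,
          Real.exp (lam * b * (∑ j ∈ Finset.Icc 1 k, γ₀ / (j : ℝ))) * (γ₀ / (k : ℝ)) ^ (a + 1)
      ≤ C * (n : ℝ) ^ (-a) := by
  set μ : ℝ := lam * b * γ₀ with hμ
  have hμpos : 0 < μ := by positivity
  set p : ℝ := μ - a with hp
  have hppos : 0 < p := by simp only [hp, hμ]; nlinarith
  refine ⟨Real.exp μ * γ₀ ^ (a + 1) * (1 + 1 / p), by positivity, ?_⟩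
  intro n hn
  have hn0 : (0 : ℝ) < (n : ℝ) := by exact_mod_cast Nat.lt_of_lt_of_le Nat.zero_lt_one hn
  -- identify the partial sums with harmonic numbers
  have hS : ∀ k : ℕ, (∑ j ∈ Finset.Icc 1 k, γ₀ / (j : ℝ)) = γ₀ * (harmonic k : ℝ) := by
    intro k
    rw [harmonic_eq_sum_Icc]
    push_cast
    rw [Finset.mul_sum]
    exact Finset.sum_congr rfl fun j _ => (div_eq_mul_inv _ _)
  -- bound each term of the sum
  have hterm : ∀ k ∈ Finset.Icc 1 n,
      Real.exp (lam * b * (∑ j ∈ Finset.Icc 1 k, γ₀ / (j : ℝ))) * (γ₀ / (k : ℝ)) ^ (a + 1)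
      ≤ (Real.exp μ * γ₀ ^ (a + 1)) * (k : ℝ) ^ (p - 1) := by
    intro k hk
    have hk1 : 1 ≤ k := (Finset.mem_Icc.mp hk).1
    have hk0 : (0 : ℝ) < (k : ℝ) := by exact_mod_cast Nat.lt_of_lt_of_le Nat.zero_lt_one hk1
    have hH : (harmonic k : ℝ) ≤ 1 + Real.log k := harmonic_le_one_add_log k
    have h1 : Real.exp (lam * b * (∑ j ∈ Finset.Icc 1 k, γ₀ / (j : ℝ)))
        ≤ Real.exp μ * (k : ℝ) ^ μ := by
      rw [hS k, Real.rpow_def_of_pos hk0, ← Real.exp_add]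
      apply Real.exp_le_exp.mpr
      have : lam * b * (γ₀ * (harmonic k : ℝ)) = μ * (harmonic k : ℝ) := by ring
      rw [this]
      calc μ * (harmonic k : ℝ) ≤ μ * (1 + Real.log k) := by
            exact mul_le_mul_of_nonneg_left hH hμpos.le
        _ = μ + Real.log k * μ := by ring
    have h2 : (γ₀ / (k : ℝ)) ^ (a + 1) = γ₀ ^ (a + 1) / (k : ℝ) ^ (a + 1) :=
      Real.div_rpow hγ₀.le hk0.le _
    calc Real.exp (lam * b * (∑ j ∈ Finset.Icc 1 k, γ₀ / (j : ℝ))) * (γ₀ / (k : ℝ)) ^ (a + 1)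
        ≤ (Real.exp μ * (k : ℝ) ^ μ) * (γ₀ ^ (a + 1) / (k : ℝ) ^ (a + 1)) := by
          rw [h2]
          exact mul_le_mul_of_nonneg_right h1 (by positivity)
      _ = (Real.exp μ * γ₀ ^ (a + 1)) * ((k : ℝ) ^ μ / (k : ℝ) ^ (a + 1)) := by ring
      _ = (Real.exp μ * γ₀ ^ (a + 1)) * (k : ℝ) ^ (p - 1) := by
          rw [← Real.rpow_sub hk0]
          congr 1
          rw [hp]; ring
  -- bound the full sum
  have hsum : (∑ k ∈ Finset.Icc 1 n,
      Real.exp (lam * b * (∑ j ∈ Finset.Icc 1 k, γ₀ / (j : ℝ))) * (γ₀ / (k : ℝ)) ^ (a + 1))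
      ≤ (Real.exp μ * γ₀ ^ (a + 1)) * ((1 + 1 / p) * (n : ℝ) ^ p) := by
    calc (∑ k ∈ Finset.Icc 1 n,
        Real.exp (lam * b * (∑ j ∈ Finset.Icc 1 k, γ₀ / (j : ℝ))) * (γ₀ / (k : ℝ)) ^ (a + 1))
        ≤ ∑ k ∈ Finset.Icc 1 n, (Real.exp μ * γ₀ ^ (a + 1)) * (k : ℝ) ^ (p - 1) :=
          Finset.sum_le_sum hterm
      _ = (Real.exp μ * γ₀ ^ (a + 1)) * ∑ k ∈ Finset.Icc 1 n, (k : ℝ) ^ (p - 1) := by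
          rw [Finset.mul_sum]
      _ ≤ (Real.exp μ * γ₀ ^ (a + 1)) * ((1 + 1 / p) * (n : ℝ) ^ p) := by
          exact mul_le_mul_of_nonneg_left (aux_sum_rpow p hppos n hn) (by positivity)
  -- bound the exponential prefactor
  have hpre : Real.exp (-(lam * b) * (∑ k ∈ Finset.Icc 1 n, γ₀ / (k : ℝ)))
      ≤ (n : ℝ) ^ (-μ) := by
    rw [hS n, Real.rpow_def_of_pos hn0]
    apply Real.exp_le_exp.mpr
    have hlog : Real.log n ≤ (harmonic n : ℝ) := by
      calc Real.log n ≤ Real.log (n + 1) := by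
            apply Real.log_le_log hn0; linarith
        _ ≤ (harmonic n : ℝ) := by exact_mod_cast log_add_one_le_harmonic n
    have : -(lam * b) * (γ₀ * (harmonic n : ℝ)) = -μ * (harmonic n : ℝ) := by ring
    rw [this]
    nlinarith
  -- combine
  have hsumnn : (0:ℝ) ≤ ∑ k ∈ Finset.Icc 1 n,
      Real.exp (lam * b * (∑ j ∈ Finset.Icc 1 k, γ₀ / (j : ℝ))) * (γ₀ / (k : ℝ)) ^ (a + 1) := by
    apply Finset.sum_nonneg
    intro k hk
    have hk0 : (0:ℝ) ≤ (k:ℝ) := Nat.cast_nonneg k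
    positivity
  calc Real.exp (-(lam * b) * (∑ k ∈ Finset.Icc 1 n, γ₀ / (k : ℝ))) *
        ∑ k ∈ Finset.Icc 1 n,
          Real.exp (lam * b * (∑ j ∈ Finset.Icc 1 k, γ₀ / (j : ℝ))) * (γ₀ / (k : ℝ)) ^ (a + 1)
      ≤ (n : ℝ) ^ (-μ) * ((Real.exp μ * γ₀ ^ (a + 1)) * ((1 + 1 / p) * (n : ℝ) ^ p)) := by
        apply mul_le_mul hpre hsum hsumnn (by positivity)
    _ = (Real.exp μ * γ₀ ^ (a + 1) * (1 + 1 / p)) * ((n : ℝ) ^ (-μ) * (n : ℝ) ^ p) := by ring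
    _ = (Real.exp μ * γ₀ ^ (a + 1) * (1 + 1 / p)) * (n : ℝ) ^ (-a) := by
        rw [← Real.rpow_add hn0]
        congr 1
        rw [hp]
        ring
end

section
/- Let (z_n) be a nonnegative sequence satisfying z_{n+1} ≤ (1 - λγ_n + o(γ_n)) z_n + o(γ_n) for n large, where λ > 0 and (γ_n) is a positive sequence decreasing to 0 with ∑ γ_n = ∞. Then z_n → 0 as n → ∞. -/
open Filter Finset

/-- If a nonnegative sequence satisfies `z_{n+1} ≤ (1 - λγ_n + o(γ_n)) z_n + o(γ_n)`
with `λ > 0`, `γ_n ↓ 0` and `∑ γ_n = ∞`, then `z_n → 0`. -/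
theorem stmt_6 (z γ a e : ℕ → ℝ) (lam : ℝ) (hlam : 0 < lam)
    (hz : ∀ n, 0 ≤ z n) (hγpos : ∀ n, 0 < γ n)
    (hγ0 : Tendsto γ atTop (nhds 0))
    (hγdiv : Tendsto (fun n => ∑ k ∈ Finset.range n, γ k) atTop atTop)
    (ha : Tendsto a atTop (nhds 0)) (he : Tendsto e atTop (nhds 0))
    (n₀ : ℕ)
    (hrec : ∀ n, n₀ ≤ n → z (n + 1) ≤ (1 - lam * γ n + a n * γ n) * z n + γ n * e n) :
    Tendsto z atTop (nhds 0) := by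
  rw [Metric.tendsto_atTop]
  intro ε hε
  set c : ℝ := lam / 2 with hc
  have hcpos : 0 < c := by positivity
  have hA : ∀ᶠ n in atTop, a n < c := ha.eventually_lt_const hcpos
  have hE : ∀ᶠ n in atTop, e n < c * ε / 2 :=
    he.eventually_lt_const (by positivity)
  have hG : ∀ᶠ n in atTop, c * γ n < 1 := by
    have : Tendsto (fun n => c * γ n) atTop (nhds (c * 0)) := hγ0.const_mul c
    rw [mul_zero] at this
    exact this.eventually_lt_const one_pos
  obtain ⟨N, hN⟩ := ((hA.and (hE.and hG)).and (eventually_ge_atTop n₀)).exists_forall_of_atTop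
  have haN : ∀ n, N ≤ n → a n < c := fun n hn => (hN n hn).1.1
  have heN : ∀ n, N ≤ n → e n < c * ε / 2 := fun n hn => (hN n hn).1.2.1
  have hgN : ∀ n, N ≤ n → c * γ n < 1 := fun n hn => (hN n hn).1.2.2
  have hn0N : ∀ n, N ≤ n → n₀ ≤ n := fun n hn => le_trans (hN n hn).2 le_rfl
  -- key recursion
  have key : ∀ n, N ≤ n → z (n + 1) ≤ (1 - c * γ n) * z n + γ n * (c * ε / 2) := by
    intro n hn
    have h1 := hrec n (hn0N n hn)
    have h2 : (1 - lam * γ n + a n * γ n) * z n ≤ (1 - c * γ n) * z n := by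
      apply mul_le_mul_of_nonneg_right _ (hz n)
      have := mul_le_mul_of_nonneg_right (haN n hn).le (hγpos n).le
      have hcc : lam = 2 * c := by rw [hc]; ring
      nlinarith [hγpos n]
    have h3 : γ n * e n ≤ γ n * (c * ε / 2) :=
      mul_le_mul_of_nonneg_left (heN n hn).le (hγpos n).le
    linarith
  -- Step A: z drops below ε at some point ≥ N
  have hdrop : ∃ m, N ≤ m ∧ z m < ε := by
    by_contra h
    push_neg at h
    have step : ∀ k, z (N + k) ≤
        z N - (c * ε / 2) * ((∑ i ∈ range (N + k), γ i) - ∑ i ∈ range N, γ i) := by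
      intro k
      induction k with
      | zero => simp
      | succ k ih =>
        have hk : N ≤ N + k := Nat.le_add_right _ _
        have h1 := key (N + k) hk
        have h2 := h (N + k) hk
        have h3 : c * γ (N + k) * z (N + k) ≥ c * γ (N + k) * ε :=
          mul_le_mul_of_nonneg_left h2 (mul_nonneg hcpos.le (hγpos _).le)
        rw [show N + (k + 1) = (N + k) + 1 from rfl, Finset.sum_range_succ]
        nlinarith [hγpos (N + k)]
    obtain ⟨m, hm1, hm2⟩ := ((hγdiv.eventually_ge_atTop
        ((∑ i ∈ range N, γ i) + z N / (c * ε / 2) + 1)).and (eventually_ge_atTop N)).exists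
    obtain ⟨k, rfl⟩ := Nat.exists_eq_add_of_le hm2
    have := step k
    have hpos : (0:ℝ) < c * ε / 2 := by positivity
    have h5 : z N / (c * ε / 2) * (c * ε / 2) = z N := div_mul_cancel₀ _ hpos.ne'
    nlinarith [hz (N + k), h (N + k) (Nat.le_add_right _ _)]
  obtain ⟨m, hmN, hmε⟩ := hdrop
  -- Step B: invariance
  have hinv : ∀ n, m ≤ n → z n < ε := by
    intro n hn
    induction n, hn using Nat.le_induction with
    | base => exact hmε
    | succ n hn ih =>
      have hNn : N ≤ n := le_trans hmN hn
      have h1 := key n hNn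
      have h2 := hgN n hNn
      nlinarith [hγpos n, hz n, mul_le_mul_of_nonneg_left ih.le (sub_nonneg.mpr h2.le),
        mul_pos (mul_pos hcpos (hγpos n)) hε]
  refine ⟨m, fun n hn => ?_⟩
  rw [Real.dist_eq, sub_zero, abs_of_nonneg (hz n)]
  exact hinv n hn
end

section
/- Let (z_p) be a nonnegative sequence satisfying z_{p+1} ≤ (1 - 2λγ_{p+1} + Cγ_{p+1}²) z_p + Cγ_{p+1}² for all p ≥ 0, where λ > 0, C > 0, γ_p = γ₀/p with 2λγ₀ > 1. Then there exists a constant C' (depending only on λ, C, γ₀, z₀) such that z_p ≤ C' γ_p for all p ≥ 1. -/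
set_option maxHeartbeats 1000000


/-- If `z_{p+1} ≤ (1 - 2λγ_{p+1} + Cγ_{p+1}²) z_p + Cγ_{p+1}²` with `γ_p = γ₀/p` and
`2λγ₀ > 1`, then `z_p ≤ C' γ_p` for all `p ≥ 1`. -/
theorem stmt_10 (z : ℕ → ℝ) (lam C γ₀ : ℝ) (hlam : 0 < lam) (hC : 0 < C) (hγ₀ : 0 < γ₀)
    (hcond : 1 < 2 * lam * γ₀) (hznn : ∀ p, 0 ≤ z p)
    (hrec : ∀ p : ℕ, z (p + 1) ≤
      (1 - 2 * lam * (γ₀ / (p + 1 : ℝ)) + C * (γ₀ / (p + 1 : ℝ)) ^ 2) * z p +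
        C * (γ₀ / (p + 1 : ℝ)) ^ 2) :
    ∃ C' : ℝ, 0 < C' ∧ ∀ p : ℕ, 1 ≤ p → z p ≤ C' * (γ₀ / (p : ℝ)) := by
  set a := 2 * lam * γ₀ with ha
  set b := C * γ₀ ^ 2 with hb
  have hbpos : (0:ℝ) < b := by rw [hb]; positivity
  have hε : (0:ℝ) < a - 1 := by rw [ha]; linarith
  obtain ⟨N, hN⟩ := exists_nat_gt (max a (2 * b / (a - 1)))
  have hNa : a < (N:ℝ) := lt_of_le_of_lt (le_max_left _ _) hN
  have hNb : 2 * b / (a - 1) < (N:ℝ) := lt_of_le_of_lt (le_max_right _ _) hN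
  have hN1 : 1 ≤ N := by
    by_contra hcon
    push_neg at hcon
    interval_cases N
    · simp at hNa; linarith
  set M := max (2 * b / (a - 1)) ((N:ℝ) * z N) with hM
  have hMpos : 0 < M := lt_of_lt_of_le (by positivity) (le_max_left _ _)
  have hMb : 2 * b / (a - 1) ≤ M := le_max_left _ _
  have h2bM : 2 * b ≤ M * (a - 1) := by
    rw [div_le_iff₀ hε] at hMb; linarith
  have key : ∀ p : ℕ, N ≤ p → z p ≤ M / (p : ℝ) := by
    intro p
    induction p with
    | zero => intro h; omega
    | succ p ih =>
      intro hp
      rcases Nat.lt_or_ge p N with h | h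
      · -- base case: N = p + 1
        have hNe : N = p + 1 := by omega
        rw [← hNe]
        have hN0 : (0:ℝ) < (N:ℝ) := by
          have : (0:ℕ) < N := hN1
          exact_mod_cast this
        rw [le_div_iff₀ hN0]
        have hzN : (N:ℝ) * z N ≤ M := le_max_right _ _
        nlinarith [hznn N]
      · -- inductive step
        have hzp := ih h
        have hqN : (N:ℝ) ≤ (p:ℝ) := by exact_mod_cast h
        have hqa : a < (p:ℝ) := lt_of_lt_of_le hNa hqN
        have hqb : 2 * b / (a - 1) < (p:ℝ) := lt_of_lt_of_le hNb hqN
        have hqpos : (0:ℝ) < (p:ℝ) := by linarith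
        have hq1 : (0:ℝ) < (p:ℝ) + 1 := by linarith
        have hrec' := hrec p
        set q := (p:ℝ) with hq
        have h2bq : 2 * b < q * (a - 1) := by
          rw [div_lt_iff₀ hε] at hqb; linarith
        have hE0 : (0:ℝ) ≤ 1 - 2 * lam * (γ₀ / (q + 1)) + C * (γ₀ / (q + 1)) ^ 2 := by
          have h1 : 2 * lam * (γ₀ / (q + 1)) = a / (q + 1) := by rw [ha]; ring
          have h2 : a / (q + 1) < 1 := by
            rw [div_lt_one hq1]; linarith
          nlinarith [mul_nonneg hC.le (sq_nonneg (γ₀ / (q + 1)))]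
        have hstep : z (p + 1) ≤
            (1 - 2 * lam * (γ₀ / (q + 1)) + C * (γ₀ / (q + 1)) ^ 2) * (M / q)
              + C * (γ₀ / (q + 1)) ^ 2 := by
          have hmul := mul_le_mul_of_nonneg_left hzp hE0
          linarith
        have hmain : (1 - 2 * lam * (γ₀ / (q + 1)) + C * (γ₀ / (q + 1)) ^ 2) * (M / q)
              + C * (γ₀ / (q + 1)) ^ 2 ≤ M / (q + 1) := by
          rw [← sub_nonneg]
          have hid : M / (q + 1) - ((1 - 2 * lam * (γ₀ / (q + 1)) + C * (γ₀ / (q + 1)) ^ 2)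
                * (M / q) + C * (γ₀ / (q + 1)) ^ 2)
              = (M * ((a - 1) * (q + 1) - b) - b * q) / (q * (q + 1) ^ 2) := by
            rw [ha, hb]
            field_simp
            ring
          rw [hid]
          apply div_nonneg
          · nlinarith [mul_nonneg (sub_nonneg.2 h2bM) hqpos.le,
              mul_nonneg (by linarith : (0:ℝ) ≤ q * (a - 1) - 2 * b) hMpos.le]
          · positivity
        have hcast : ((p + 1 : ℕ) : ℝ) = q + 1 := by push_cast; ring
        rw [hcast]
        linarith
  -- assemble the constant
  set S := ∑ k ∈ Finset.range N, (k:ℝ) * z k with hS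
  have hSnn : 0 ≤ S := Finset.sum_nonneg (fun k _ => mul_nonneg (Nat.cast_nonneg k) (hznn k))
  refine ⟨(M + S + 1) / γ₀, by positivity, ?_⟩
  intro p hp
  have hppos : (0:ℝ) < (p:ℝ) := by
    have : (0:ℕ) < p := hp
    exact_mod_cast this
  have hid : (M + S + 1) / γ₀ * (γ₀ / (p:ℝ)) = (M + S + 1) / (p:ℝ) := by
    field_simp
  rw [hid, le_div_iff₀ hppos]
  rcases Nat.lt_or_ge p N with h | h
  · -- small p: use the sum bound
    have hterm : (p:ℝ) * z p ≤ S := by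
      rw [hS]
      exact Finset.single_le_sum (f := fun (k : ℕ) => (k:ℝ) * z k)
        (fun (k : ℕ) _ => mul_nonneg (Nat.cast_nonneg k) (hznn k)) (Finset.mem_range.2 h)
    nlinarith [hMpos]
  · have := key p h
    rw [le_div_iff₀ hppos] at this
    linarith
end

section
/- Let h^n : ℝ^d → ℝ^d be C¹ functions with zeros θ*ⁿ converging to θ*, with Dh^n converging locally uniformly to Dh (Dh continuous), and suppose λ̲ > 0 satisfies ⟨θ - θ*ⁿ, h^n(θ)⟩ ≥ λ̲|θ - θ*ⁿ|² for all θ and all n. Then every eigenvalue of Dh(θ*) has real part at least λ̲; i.e., λ_m ≥ λ̲, where λ_m denotes the smallest real part among eigenvalues of Dh(θ*). -/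
open Filter
open scoped RealInnerProductSpace

/-- If the uniform strong mean-reverting condition
`⟪θ - θ*ⁿ, hⁿ(θ)⟫ ≥ λ̲ |θ - θ*ⁿ|²` holds for all `n`, `θ*ⁿ → θ*`, and `Dhⁿ → Dh`
locally uniformly with `Dh` continuous, then every eigenvalue of `Dh(θ*)` has real
part at least `λ̲`. -/
theorem stmt_11 {d : ℕ} (h : EuclideanSpace ℝ (Fin d) → EuclideanSpace ℝ (Fin d))
    (hn : ℕ → EuclideanSpace ℝ (Fin d) → EuclideanSpace ℝ (Fin d))
    (θstar : EuclideanSpace ℝ (Fin d)) (θstarn : ℕ → EuclideanSpace ℝ (Fin d))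
    (hC1 : ContDiff ℝ 1 h) (hnC1 : ∀ n, ContDiff ℝ 1 (hn n))
    (hzero : h θstar = 0) (hnzero : ∀ n, hn n (θstarn n) = 0)
    (hconv : Tendsto θstarn atTop (nhds θstar))
    (hDloc : TendstoLocallyUniformly (fun n x => fderiv ℝ (hn n) x)
      (fun x => fderiv ℝ h x) atTop)
    (lam : ℝ) (hlam : 0 < lam)
    (hmr : ∀ n θ, lam * ‖θ - θstarn n‖ ^ 2 ≤ ⟪θ - θstarn n, hn n θ⟫) :
    ∀ μ ∈ spectrum ℂ ((Matrix.of fun i j =>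
        fderiv ℝ h θstar (EuclideanSpace.single j 1) i).map (algebraMap ℝ ℂ)),
      lam ≤ μ.re := by
  -- Step 1: for each `n`, the quadratic lower bound for the derivative at `θstarn n`.
  have step1 : ∀ (n : ℕ) (u : EuclideanSpace ℝ (Fin d)),
      lam * ‖u‖ ^ 2 ≤ ⟪u, fderiv ℝ (hn n) (θstarn n) u⟫ := by
    intro n u
    set g := hn n with hg
    set θ0 := θstarn n with hθ0
    set f : ℝ → ℝ := fun t => ⟪u, g (θ0 + t • u)⟫ with hf
    have h1 : HasDerivAt (fun t : ℝ => θ0 + t • u) u 0 := by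
      simpa using ((hasDerivAt_id (0:ℝ)).smul_const u).const_add θ0
    have h2 : HasFDerivAt g (fderiv ℝ g θ0) ((fun t : ℝ => θ0 + t • u) 0) := by
      simpa using (((hnC1 n).differentiable one_ne_zero) θ0).hasFDerivAt
    have h3 : HasDerivAt (fun t : ℝ => g (θ0 + t • u)) (fderiv ℝ g θ0 u) 0 :=
      h2.comp_hasDerivAt 0 h1
    have h4 : HasDerivAt f ⟪u, fderiv ℝ g θ0 u⟫ 0 := by
      have := (hasDerivAt_const (0:ℝ) u).inner ℝ h3
      simpa using this
    have hf0 : f 0 = 0 := by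
      have hz0 : g θ0 = 0 := hnzero n
      simp [hf, hz0]
    have h5 : Tendsto (slope f 0) (nhdsWithin (0:ℝ) (Set.Ioi 0))
        (nhds ⟪u, fderiv ℝ g θ0 u⟫) :=
      (hasDerivAt_iff_tendsto_slope.mp h4).mono_left
        (nhdsWithin_mono _ fun t ht => ne_of_gt ht)
    refine ge_of_tendsto h5 ?_
    filter_upwards [self_mem_nhdsWithin] with t (ht : 0 < t)
    have hthis := hmr n (θ0 + t • u)
    rw [← hθ0, add_sub_cancel_left] at hthis
    have hnorm : ‖t • u‖ ^ 2 = t ^ 2 * ‖u‖ ^ 2 := by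
      rw [norm_smul, Real.norm_eq_abs, abs_of_pos ht]; ring
    rw [hnorm, real_inner_smul_left] at hthis
    have hslope : slope f 0 t = f t / t := by
      rw [slope_def_field, hf0, sub_zero, sub_zero]
    rw [hslope, le_div_iff₀ ht]
    calc lam * ‖u‖ ^ 2 * t = lam * (t ^ 2 * ‖u‖ ^ 2) / t := by field_simp
      _ ≤ t * f t / t := by gcongr
      _ = f t := by field_simp
  -- Step 2: pass to the limit `n → ∞`.
  have key : ∀ u : EuclideanSpace ℝ (Fin d),
      lam * ‖u‖ ^ 2 ≤ ⟪u, fderiv ℝ h θstar u⟫ := by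
    intro u
    have hcont : Continuous (fun x => fderiv ℝ h x) := hC1.continuous_fderiv one_ne_zero
    have hDt : Tendsto (fun n => fderiv ℝ (hn n) (θstarn n)) atTop
        (nhds (fderiv ℝ h θstar)) :=
      hDloc.tendsto_comp hcont.continuousAt hconv
    have hIt : Tendsto (fun n => ⟪u, fderiv ℝ (hn n) (θstarn n) u⟫) atTop
        (nhds ⟪u, fderiv ℝ h θstar u⟫) := by
      have hev : Continuous fun L : EuclideanSpace ℝ (Fin d) →L[ℝ]
          EuclideanSpace ℝ (Fin d) => ⟪u, L u⟫ :=
        continuous_const.inner (ContinuousLinearMap.apply ℝ _ u).continuous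
      exact (hev.tendsto _).comp hDt
    exact ge_of_tendsto hIt (Eventually.of_forall fun n => step1 n u)
  -- Step 3: the eigenvalue bound.
  intro μ hμ
  set L := fderiv ℝ h θstar with hL
  set A : Matrix (Fin d) (Fin d) ℝ :=
    Matrix.of fun i j => L (EuclideanSpace.single j 1) i with hA
  -- sums in `EuclideanSpace` evaluate pointwise
  have sum_apply : ∀ (w : Fin d → EuclideanSpace ℝ (Fin d)) (k : Fin d),
      (∑ j, w j) k = ∑ j, w j k := fun w k => by rw [WithLp.ofLp_sum, Finset.sum_apply]
  have Lapply : ∀ (z : EuclideanSpace ℝ (Fin d)) (i : Fin d),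
      L z i = ∑ j, A i j * z j := by
    intro z i
    have hz : z = ∑ j, z j • EuclideanSpace.single j (1:ℝ) := by
      ext k; rw [sum_apply]; simp [EuclideanSpace.single_apply]
    conv_lhs => rw [hz]
    rw [map_sum, sum_apply]
    simp [hA, mul_comm]
  -- extract an eigenvector
  obtain ⟨v, hv0, hveq⟩ : ∃ v : Fin d → ℂ, v ≠ 0 ∧
      (A.map (algebraMap ℝ ℂ)).mulVec v = μ • v := by
    have h1 : Module.End.HasEigenvalue (Matrix.toLin' (A.map (algebraMap ℝ ℂ))) μ := by
      rw [Module.End.hasEigenvalue_iff_mem_spectrum]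
      rwa [show Matrix.toLin' (A.map (algebraMap ℝ ℂ)) =
        Matrix.toLinAlgEquiv (Pi.basisFun ℂ (Fin d)) (A.map (algebraMap ℝ ℂ)) from rfl,
        AlgEquiv.spectrum_eq]
    obtain ⟨w, hw⟩ := h1.exists_hasEigenvector
    exact ⟨w, hw.2, by rw [← Matrix.toLin'_apply]; exact hw.apply_eq_smul⟩
  set x : EuclideanSpace ℝ (Fin d) := WithLp.toLp 2 (fun i => (v i).re) with hxdef
  set y : EuclideanSpace ℝ (Fin d) := WithLp.toLp 2 (fun i => (v i).im) with hydef
  have eqc : ∀ i, ∑ j, (A i j : ℂ) * v j = μ * v i := by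
    intro i
    have := congrFun hveq i
    simpa [Matrix.mulVec, dotProduct, Matrix.map_apply] using this
  have hre : ∀ i, ∑ j, A i j * x j = μ.re * x i - μ.im * y i := by
    intro i
    have := congrArg Complex.re (eqc i)
    simpa [Complex.mul_re] using this
  have him : ∀ i, ∑ j, A i j * y j = μ.re * y i + μ.im * x i := by
    intro i
    have h' := congrArg Complex.im (eqc i)
    simpa [Complex.mul_im] using h'
  have hx : L x = μ.re • x - μ.im • y := by
    ext i
    rw [Lapply x i]
    simpa using hre i
  have hy : L y = μ.re • y + μ.im • x := by
    ext i
    rw [Lapply y i]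
    simpa using him i
  have e1 : ⟪x, L x⟫ = μ.re * ⟪x, x⟫ - μ.im * ⟪x, y⟫ := by
    rw [hx, inner_sub_right, real_inner_smul_right, real_inner_smul_right]
  have e2 : ⟪y, L y⟫ = μ.re * ⟪y, y⟫ + μ.im * ⟪y, x⟫ := by
    rw [hy, inner_add_right, real_inner_smul_right, real_inner_smul_right]
  have esum : ⟪x, L x⟫ + ⟪y, L y⟫ = μ.re * (‖x‖ ^ 2 + ‖y‖ ^ 2) := by
    rw [e1, e2, real_inner_comm y x, real_inner_self_eq_norm_sq, real_inner_self_eq_norm_sq]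
    ring
  have hkey : lam * (‖x‖ ^ 2 + ‖y‖ ^ 2) ≤ μ.re * (‖x‖ ^ 2 + ‖y‖ ^ 2) := by
    rw [← esum, mul_add]
    exact add_le_add (key x) (key y)
  have hne : x ≠ 0 ∨ y ≠ 0 := by
    by_contra hcon
    push_neg at hcon
    apply hv0
    funext i
    have hxi : x i = 0 := by rw [hcon.1]; rfl
    have hyi : y i = 0 := by rw [hcon.2]; rfl
    exact Complex.ext hxi hyi
  have hpos : 0 < ‖x‖ ^ 2 + ‖y‖ ^ 2 := by
    rcases hne with hne | hne
    · have h0 : (0:ℝ) < ‖x‖ := norm_pos_iff.mpr hne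
      nlinarith [sq_nonneg ‖y‖]
    · have h0 : (0:ℝ) < ‖y‖ := norm_pos_iff.mpr hne
      nlinarith [sq_nonneg ‖x‖]
  nlinarith [hkey, hpos]
end
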